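/- Let C be an almost affine code of length n and dimension k on alphabet F, and let c̃ ∈ C. Then the generalized critical exponents γ_i(c̃) are independent of the choice of codeword c̃: for any c̃, d̃ ∈ C and all 1 ≤ i ≤ n, γ_i(c̃) = γ_i(d̃). -/

import Mathlib

/-- The projection (puncturing) of a block code `C ⊆ F^n` to the coordinate set `X`. -/
def projC {F : Type*} [DecidableEq F] {n : ℕ} (C : Finset (Fin n → F)) (X : Finset (Fin n)) :
    Finset ({ i // i ∈ X } → F) :=
  C.image (fun c i => c i.1)

/-- `C ⊆ F^n` is an almost affine code of length `n` and dimension `k`: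
`|C| = |F|^k` and every projection has cardinality a power of `|F|`. -/
def IsAlmostAffineCode {F : Type*} [Fintype F] [DecidableEq F] (n k : ℕ)
    (C : Finset (Fin n → F)) : Prop :=
  C.card = Fintype.card F ^ k ∧
    ∀ X : Finset (Fin n), ∃ s : ℕ, (projC C X).card = Fintype.card F ^ s

/-- The `ct`-support of a word `c`. -/
def suppW {F : Type*} [DecidableEq F] {n : ℕ} (c ct : Fin n → F) : Finset (Fin n) :=
  Finset.univ.filter (fun i => c i ≠ ct i)

/-- `C(X, ct)`: the codewords of `C` agreeing with `ct` on `X`. -/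
def agreeOn {F : Type*} [DecidableEq F] {n : ℕ} (C : Finset (Fin n → F))
    (X : Finset (Fin n)) (ct : Fin n → F) : Finset (Fin n → F) :=
  C.filter (fun w => ∀ i ∈ X, w i = ct i)

/-- The `ct`-support of a code `D`. -/
def suppCode {F : Type*} [DecidableEq F] {n : ℕ} (D : Finset (Fin n → F)) (ct : Fin n → F) :
    Finset (Fin n) :=
  D.biUnion (fun w => suppW w ct)

/-- The `i`-th generalized critical exponent of `C` with respect to `ct`:
the minimal number `j` of codewords whose `ct`-supports together cover at least `i`
coordinates. -/
noncomputable def critExp {F : Type*} [Fintype F] [DecidableEq F] {n : ℕ}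
    (C : Finset (Fin n → F)) (ct : Fin n → F) (i : ℕ) : ℕ :=
  sInf {j : ℕ | ∃ cs : Fin j → (Fin n → F), (∀ l, cs l ∈ C) ∧
    i ≤ (Finset.univ.biUnion fun l => suppW (cs l) ct).card}

set_option linter.unusedSectionVars false
set_option linter.unusedVariables false

section aux
variable {F : Type*} [Fintype F] [DecidableEq F] {n : ℕ}

/-- restriction map to coordinates in `Y` -/
def resY (Y : Finset (Fin n)) (c : Fin n → F) : {i // i ∈ Y} → F := fun i => c i.1

lemma resY_eq_iff (Y : Finset (Fin n)) (c c' : Fin n → F) :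
    resY Y c = resY Y c' ↔ ∀ i ∈ Y, c i = c' i := by
  constructor
  · intro h i hi; exact congrFun h ⟨i, hi⟩
  · intro h; funext i; exact h i.1 i.2

lemma agreeOn_eq_filter (C : Finset (Fin n → F)) (Y : Finset (Fin n)) (ct : Fin n → F) :
    agreeOn C Y ct = C.filter (fun c => resY Y c = resY Y ct) := by
  unfold agreeOn
  apply Finset.filter_congr
  intro c _
  simp [resY_eq_iff]

lemma card_image_eq_of_iff {α β γ : Type*} [DecidableEq β] [DecidableEq γ]
    (s : Finset α) (f : α → β) (g : α → γ)
    (h : ∀ a ∈ s, ∀ b ∈ s, f a = f b ↔ g a = g b) :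
    (s.image f).card = (s.image g).card := by
  classical
  induction s using Finset.induction_on with
  | empty => simp
  | insert a s ha ih =>
    rw [Finset.image_insert, Finset.image_insert]
    by_cases hf : f a ∈ s.image f
    · have hg : g a ∈ s.image g := by
        obtain ⟨b, hb, hfb⟩ := Finset.mem_image.mp hf
        exact Finset.mem_image.mpr ⟨b, hb,
          (h b (Finset.mem_insert_of_mem hb) a (Finset.mem_insert_self a s)).mp hfb⟩
      rw [Finset.insert_eq_self.mpr hf, Finset.insert_eq_self.mpr hg]
      exact ih (fun x hx y hy => h x (Finset.mem_insert_of_mem hx) y (Finset.mem_insert_of_mem hy))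
    · have hg : g a ∉ s.image g := by
        intro hmem
        obtain ⟨b, hb, hgb⟩ := Finset.mem_image.mp hmem
        exact hf (Finset.mem_image.mpr ⟨b, hb,
          (h b (Finset.mem_insert_of_mem hb) a (Finset.mem_insert_self a s)).mpr hgb⟩)
      rw [Finset.card_insert_of_notMem hf, Finset.card_insert_of_notMem hg]
      rw [ih (fun x hx y hy => h x (Finset.mem_insert_of_mem hx) y (Finset.mem_insert_of_mem hy))]

lemma onestep {k : ℕ} (hF : 1 < Fintype.card F) (C : Finset (Fin n → F))
    (hC : IsAlmostAffineCode n k C) (Y : Finset (Fin n)) (m : Fin n)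
    (ct : Fin n → F) (hct : ct ∈ C) :
    ((agreeOn C Y ct).image (fun c => c m)).card * (projC C Y).card
      = (projC C (insert m Y)).card := by
  classical
  set q := Fintype.card F with hq
  obtain ⟨s, hs⟩ := hC.2 Y
  obtain ⟨t, ht⟩ := hC.2 (insert m Y)
  have hrefine : ∀ c c' : Fin n → F, resY (insert m Y) c = resY (insert m Y) c' →
      resY Y c = resY Y c' := by
    intro c c' h
    rw [resY_eq_iff] at h ⊢
    exact fun i hi => h i (Finset.mem_insert_of_mem hi)
  have hdecomp : projC C (insert m Y)
      = (projC C Y).biUnion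
          (fun y => (C.filter (fun c => resY Y c = y)).image (resY (insert m Y))) := by
    ext v
    simp only [projC, Finset.mem_biUnion, Finset.mem_image, Finset.mem_filter]
    constructor
    · rintro ⟨c, hc, rfl⟩
      exact ⟨resY Y c, ⟨c, hc, rfl⟩, c, ⟨hc, rfl⟩, rfl⟩
    · rintro ⟨y, _, c, ⟨hc, _⟩, rfl⟩
      exact ⟨c, hc, rfl⟩
  have hdisj : ∀ y ∈ projC C Y, ∀ y' ∈ projC C Y, y ≠ y' →
      Disjoint ((C.filter (fun c => resY Y c = y)).image (resY (insert m Y)))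
        ((C.filter (fun c => resY Y c = y')).image (resY (insert m Y))) := by
    intro y _ y' _ hne
    rw [Finset.disjoint_left]
    rintro v hv hv'
    obtain ⟨c, hc, rfl⟩ := Finset.mem_image.mp hv
    obtain ⟨c', hc', he⟩ := Finset.mem_image.mp hv'
    exact hne ((Finset.mem_filter.mp hc).2 ▸ (Finset.mem_filter.mp hc').2 ▸
      (hrefine c' c he).symm ▸ rfl)
  have hsum : (projC C (insert m Y)).card
      = ∑ y ∈ projC C Y, ((C.filter (fun c => resY Y c = y)).image (resY (insert m Y))).card := by
    rw [hdecomp]; exact Finset.card_biUnion hdisj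
  have hb1 : ∀ y ∈ projC C Y,
      1 ≤ ((C.filter (fun c => resY Y c = y)).image (resY (insert m Y))).card := by
    intro y hy
    obtain ⟨c, hc, rfl⟩ := Finset.mem_image.mp hy
    refine Finset.card_pos.mpr ⟨resY (insert m Y) c, Finset.mem_image.mpr ⟨c, ?_, rfl⟩⟩
    exact Finset.mem_filter.mpr ⟨hc, rfl⟩
  have hb2 : ∀ y ∈ projC C Y,
      ((C.filter (fun c => resY Y c = y)).image (resY (insert m Y))).card ≤ q := by
    intro y _
    have : ((C.filter (fun c => resY Y c = y)).image (resY (insert m Y))).card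
        = (((C.filter (fun c => resY Y c = y)).image (resY (insert m Y))).image
            (fun v => v ⟨m, Finset.mem_insert_self m Y⟩)).card := by
      symm
      apply Finset.card_image_of_injOn
      rintro v hv v' hv' hvv
      obtain ⟨c, hc, rfl⟩ := Finset.mem_image.mp hv
      obtain ⟨c', hc', rfl⟩ := Finset.mem_image.mp hv'
      have h1 : resY Y c = y := (Finset.mem_filter.mp hc).2
      have h2 : resY Y c' = y := (Finset.mem_filter.mp hc').2
      funext i
      rcases Finset.mem_insert.mp i.2 with h | h
      · show c i.1 = c' i.1
        rw [show i.1 = m from h]; exact hvv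
      · show c i.1 = c' i.1
        exact ((resY_eq_iff Y c c').mp (h1.trans h2.symm)) i.1 h
    rw [this, hq]
    exact Finset.card_le_univ _
  have hst : s ≤ t := by
    have : q ^ s ≤ q ^ t := by
      rw [← hs, ← ht, hsum]
      calc (projC C Y).card = ∑ _y ∈ projC C Y, 1 := by simp
        _ ≤ _ := Finset.sum_le_sum hb1
    exact (Nat.pow_le_pow_iff_right hF).mp this
  have hts : t ≤ s + 1 := by
    have : q ^ t ≤ q ^ (s + 1) := by
      rw [← ht, hsum]
      calc ∑ y ∈ projC C Y, ((C.filter (fun c => resY Y c = y)).image (resY (insert m Y))).card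
          ≤ ∑ _y ∈ projC C Y, q := Finset.sum_le_sum hb2
        _ = q ^ s * q := by rw [Finset.sum_const, smul_eq_mul, hs]
        _ = q ^ (s + 1) := by ring
    exact (Nat.pow_le_pow_iff_right hF).mp this
  have hterm : ∀ y ∈ projC C Y,
      ((C.filter (fun c => resY Y c = y)).image (resY (insert m Y))).card = q ^ (t - s) := by
    have hcase : t = s ∨ t = s + 1 := by omega
    rcases hcase with h | h
    · subst h
      simp only [Nat.sub_self, pow_zero]
      have hsumeq : ∑ _y ∈ projC C Y, 1
          = ∑ y ∈ projC C Y, ((C.filter (fun c => resY Y c = y)).image (resY (insert m Y))).card := by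
        rw [← hsum]; simp [hs, ht]
      intro y hy
      exact ((Finset.sum_eq_sum_iff_of_le hb1).mp hsumeq y hy).symm
    · subst h
      simp only [Nat.add_sub_cancel_left, pow_one]
      have hsumeq : ∑ y ∈ projC C Y, ((C.filter (fun c => resY Y c = y)).image (resY (insert m Y))).card
          = ∑ _y ∈ projC C Y, q := by
        rw [← hsum, ht, Finset.sum_const, smul_eq_mul, hs]; ring
      intro y hy
      exact (Finset.sum_eq_sum_iff_of_le hb2).mp hsumeq y hy
  have hmem : resY Y ct ∈ projC C Y := Finset.mem_image.mpr ⟨ct, hct, rfl⟩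
  have hctterm := hterm _ hmem
  have heq : ((agreeOn C Y ct).image (fun c => c m)).card
      = ((C.filter (fun c => resY Y c = resY Y ct)).image (resY (insert m Y))).card := by
    rw [← agreeOn_eq_filter]
    apply card_image_eq_of_iff
    intro a ha b hb
    have ha' := (Finset.mem_filter.mp ha).2
    have hb' := (Finset.mem_filter.mp hb).2
    constructor
    · intro h
      rw [resY_eq_iff]
      intro i hi
      rcases Finset.mem_insert.mp hi with h' | h'
      · subst h'; exact h
      · rw [ha' i h', hb' i h']
    · intro h
      exact (resY_eq_iff _ a b).mp h m (Finset.mem_insert_self m Y)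
  rw [heq, hctterm, hs, ht, ← pow_add, Nat.sub_add_cancel hst]

lemma card_agree_mul {k : ℕ} (hF : 1 < Fintype.card F) (C : Finset (Fin n → F))
    (hC : IsAlmostAffineCode n k C) :
    ∀ (Y : Finset (Fin n)) (ct : Fin n → F), ct ∈ C →
      (agreeOn C Y ct).card * (projC C Y).card = C.card := by
  classical
  have base : ∀ (ct : Fin n → F), ct ∈ C →
      (agreeOn C Finset.univ ct).card * (projC C Finset.univ).card = C.card := by
    intro ct hct
    have h1 : agreeOn C Finset.univ ct = {ct} := by
      ext c
      simp only [agreeOn, Finset.mem_filter, Finset.mem_singleton]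
      constructor
      · rintro ⟨_, h⟩; funext i; exact h i (Finset.mem_univ i)
      · rintro rfl; exact ⟨hct, fun i _ => rfl⟩
    have h2 : (projC C Finset.univ).card = C.card := by
      apply Finset.card_image_of_injOn
      intro c _ c' _ h
      funext i
      exact congrFun h ⟨i, Finset.mem_univ i⟩
    rw [h1, h2, Finset.card_singleton, one_mul]
  suffices H : ∀ N (Y : Finset (Fin n)), n - Y.card ≤ N → ∀ ct ∈ C,
      (agreeOn C Y ct).card * (projC C Y).card = C.card by
    intro Y ct hct
    exact H n Y (by omega) ct hct
  intro N
  induction N with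
  | zero =>
    intro Y hY ct hct
    have : Y = Finset.univ := by
      apply Finset.eq_univ_of_card
      have := Finset.card_le_card (Finset.subset_univ Y)
      simp only [Finset.card_univ, Fintype.card_fin] at this ⊢
      omega
    rw [this]; exact base ct hct
  | succ N ih =>
    intro Y hY ct hct
    by_cases hYu : Y = Finset.univ
    · rw [hYu]; exact base ct hct
    · obtain ⟨m, hm⟩ : ∃ m, m ∉ Y := by
        by_contra h
        push_neg at h
        exact hYu (Finset.eq_univ_of_forall h)
    -- cards
      have hYcard : Y.card < n := by
        have h1 := Finset.card_lt_card (Finset.ssubset_univ_iff.mpr hYu)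
        simpa using h1
      have hins : n - (insert m Y).card ≤ N := by
        rw [Finset.card_insert_of_notMem hm]
        omega
      -- decompose agreeOn C Y ct by value at m
      have hsum : (agreeOn C Y ct).card
          = ∑ e ∈ (agreeOn C Y ct).image (fun c => c m),
              ((agreeOn C Y ct).filter (fun c => c m = e)).card :=
        Finset.card_eq_sum_card_fiberwise (fun c hc => Finset.mem_image_of_mem _ hc)
      have hfibcard : ∀ e ∈ (agreeOn C Y ct).image (fun c => c m),
          ((agreeOn C Y ct).filter (fun c => c m = e)).card
            = (agreeOn C (insert m Y) ct).card := by
        intro e he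
        obtain ⟨ce, hce, rfl⟩ := Finset.mem_image.mp he
        have hceC : ce ∈ C := (Finset.mem_filter.mp hce).1
        have hceY : ∀ i ∈ Y, ce i = ct i := (Finset.mem_filter.mp hce).2
        have hfib : (agreeOn C Y ct).filter (fun c => c m = ce m)
            = agreeOn C (insert m Y) ce := by
          ext c
          simp only [agreeOn, Finset.mem_filter, Finset.mem_insert, and_assoc]
          constructor
          · rintro ⟨hc, hY', hmv⟩
            refine ⟨hc, fun i hi => ?_⟩
            rcases hi with h | h
            · subst h; exact hmv
            · rw [hY' i h, hceY i h]
          · rintro ⟨hc, h⟩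
            exact ⟨hc, fun i hi => (h i (Or.inr hi)).trans (hceY i hi), h m (Or.inl rfl)⟩
        rw [hfib]
        -- both fibers satisfy card * proj = C.card
        have h1 := ih (insert m Y) hins ce hceC
        have h2 := ih (insert m Y) hins ct hct
        have hpos : 0 < (projC C (insert m Y)).card :=
          Finset.card_pos.mpr ⟨resY (insert m Y) ct, Finset.mem_image.mpr ⟨ct, hct, rfl⟩⟩
        exact Nat.eq_of_mul_eq_mul_right hpos (h1.trans h2.symm)
      have hsum2 : (agreeOn C Y ct).card
          = ((agreeOn C Y ct).image (fun c => c m)).card * (agreeOn C (insert m Y) ct).card := by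
        rw [hsum, Finset.sum_congr rfl hfibcard, Finset.sum_const, smul_eq_mul]
      calc (agreeOn C Y ct).card * (projC C Y).card
          = ((agreeOn C Y ct).image (fun c => c m)).card * (projC C Y).card
              * (agreeOn C (insert m Y) ct).card := by rw [hsum2]; ring
        _ = (projC C (insert m Y)).card * (agreeOn C (insert m Y) ct).card := by
              rw [onestep hF C hC Y m ct hct]
        _ = C.card := by rw [mul_comm]; exact ih (insert m Y) hins ct hct

lemma card_agree_eq {k : ℕ} (hF : 1 < Fintype.card F) (C : Finset (Fin n → F))
    (hC : IsAlmostAffineCode n k C) (Y : Finset (Fin n))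
    {ct dt : Fin n → F} (hct : ct ∈ C) (hdt : dt ∈ C) :
    (agreeOn C Y ct).card = (agreeOn C Y dt).card := by
  have h1 := card_agree_mul hF C hC Y ct hct
  have h2 := card_agree_mul hF C hC Y dt hdt
  have hpos : 0 < (projC C Y).card :=
    Finset.card_pos.mpr ⟨resY Y ct, Finset.mem_image.mpr ⟨ct, hct, rfl⟩⟩
  exact Nat.eq_of_mul_eq_mul_right hpos (h1.trans h2.symm)

lemma supp_count_eq {k : ℕ} (hF : 1 < Fintype.card F) (C : Finset (Fin n → F))
    (hC : IsAlmostAffineCode n k C) {ct dt : Fin n → F} (hct : ct ∈ C) (hdt : dt ∈ C)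
    (X : Finset (Fin n)) :
    (C.filter (fun c => suppW c ct = X)).card = (C.filter (fun c => suppW c dt = X)).card := by
  classical
  induction X using Finset.strongInduction with
  | _ X ih =>
  have key : ∀ et : Fin n → F,
      (C.filter (fun c => suppW c et ⊆ X)).card
        = ∑ Y ∈ X.powerset, (C.filter (fun c => suppW c et = Y)).card := by
    intro et
    have h0 : (C.filter (fun c => suppW c et ⊆ X)).card
        = ∑ Y ∈ X.powerset,
            ((C.filter (fun c => suppW c et ⊆ X)).filter (fun c => suppW c et = Y)).card :=
      Finset.card_eq_sum_card_fiberwise (fun c hc =>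
        Finset.mem_powerset.mpr (Finset.mem_filter.mp hc).2)
    rw [h0]
    apply Finset.sum_congr rfl
    intro Y hY
    congr 1
    rw [Finset.filter_filter]
    apply Finset.filter_congr
    intro c _
    constructor
    · rintro ⟨_, h⟩; exact h
    · rintro rfl; exact ⟨Finset.mem_powerset.mp hY, rfl⟩
  have hsubset : ∀ et : Fin n → F,
      C.filter (fun c => suppW c et ⊆ X) = agreeOn C Xᶜ et := by
    intro et
    unfold agreeOn
    apply Finset.filter_congr
    intro c _
    constructor
    · intro h i hi
      by_contra hne
      exact (Finset.mem_compl.mp hi)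
        (h (Finset.mem_filter.mpr ⟨Finset.mem_univ i, hne⟩))
    · intro h i hi
      by_contra hni
      exact (Finset.mem_filter.mp hi).2 (h i (Finset.mem_compl.mpr hni))
  have hagree : (C.filter (fun c => suppW c ct ⊆ X)).card
      = (C.filter (fun c => suppW c dt ⊆ X)).card := by
    rw [hsubset ct, hsubset dt]
    exact card_agree_eq hF C hC Xᶜ hct hdt
  rw [key ct, key dt] at hagree
  have hXmem : X ∈ X.powerset := Finset.mem_powerset_self X
  rw [← Finset.sum_erase_add _ _ hXmem, ← Finset.sum_erase_add _ _ hXmem] at hagree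
  have herase : ∑ Y ∈ X.powerset.erase X, (C.filter (fun c => suppW c ct = Y)).card
      = ∑ Y ∈ X.powerset.erase X, (C.filter (fun c => suppW c dt = Y)).card := by
    apply Finset.sum_congr rfl
    intro Y hY
    have hYX : Y ⊂ X := by
      rcases Finset.mem_erase.mp hY with ⟨hne, hmem⟩
      exact lt_of_le_of_ne (Finset.mem_powerset.mp hmem) hne
    exact ih Y hYX
  omega

lemma exists_supp_transfer {k : ℕ} (hF : 1 < Fintype.card F) (C : Finset (Fin n → F))
    (hC : IsAlmostAffineCode n k C) {ct dt : Fin n → F} (hct : ct ∈ C) (hdt : dt ∈ C)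
    (X : Finset (Fin n)) (h : ∃ c ∈ C, suppW c ct = X) :
    ∃ d ∈ C, suppW d dt = X := by
  classical
  have hcount := supp_count_eq hF C hC hct hdt X
  obtain ⟨c, hc, hXc⟩ := h
  have : 0 < (C.filter (fun c => suppW c ct = X)).card :=
    Finset.card_pos.mpr ⟨c, Finset.mem_filter.mpr ⟨hc, hXc⟩⟩
  rw [hcount] at this
  obtain ⟨d, hd⟩ := Finset.card_pos.mp this
  exact ⟨d, (Finset.mem_filter.mp hd).1, (Finset.mem_filter.mp hd).2⟩

end aux

lemma critExp_mono_set {F : Type*} [Fintype F] [DecidableEq F] {n k : ℕ}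
    (hF : 1 < Fintype.card F) (C : Finset (Fin n → F)) (hC : IsAlmostAffineCode n k C)
    {ct dt : Fin n → F} (hct : ct ∈ C) (hdt : dt ∈ C) (i j : ℕ)
    (h : ∃ cs : Fin j → (Fin n → F), (∀ l, cs l ∈ C) ∧
      i ≤ (Finset.univ.biUnion fun l => suppW (cs l) ct).card) :
    ∃ cs : Fin j → (Fin n → F), (∀ l, cs l ∈ C) ∧
      i ≤ (Finset.univ.biUnion fun l => suppW (cs l) dt).card := by
  obtain ⟨cs, hmem, hcard⟩ := h
  have hchoice : ∀ l : Fin j, ∃ d ∈ C, suppW d dt = suppW (cs l) ct := fun l =>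
    exists_supp_transfer hF C hC hct hdt (suppW (cs l) ct) ⟨cs l, hmem l, rfl⟩
  choose ds hds1 hds2 using hchoice
  refine ⟨ds, hds1, ?_⟩
  have : (Finset.univ.biUnion fun l => suppW (ds l) dt)
      = (Finset.univ.biUnion fun l => suppW (cs l) ct) :=
    Finset.biUnion_congr rfl (fun l _ => hds2 l)
  rw [this]
  exact hcard

/-- the generalized critical exponents of an almost affine code are
independent of the chosen base codeword. -/
theorem critExp_independent_of_basepoint
    {F : Type*} [Fintype F] [DecidableEq F] (hF : 1 < Fintype.card F)
    {n k : ℕ} (C : Finset (Fin n → F)) (hC : IsAlmostAffineCode n k C)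
    (ct dt : Fin n → F) (hct : ct ∈ C) (hdt : dt ∈ C)
    (i : ℕ) (hi1 : 1 ≤ i) (hi2 : i ≤ n) :
    critExp C ct i = critExp C dt i := by
  unfold critExp
  congr 1
  ext j
  exact ⟨critExp_mono_set hF C hC hct hdt i j, critExp_mono_set hF C hC hdt hct i j⟩
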